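/- Every solution (x_1(t), x_2(t)) of the deterministic SIS competition system dx_1/dt = λ_1 x_1 (1 - x_1 - x_2) - μ_1 x_1, dx_2/dt = λ_2 x_2 (1 - x_1 - x_2) - μ_2 x_2 satisfies, for all t ≥ 0, the conservation relation x_1(t)^{λ_2} / x_2(t)^{λ_1} = (x_1(0)^{λ_2} / x_2(0)^{λ_1}) · exp((μ_2 λ_1 - μ_1 λ_2) t), provided x_1(0) > 0 and x_2(0) > 0. -/

import Mathlib

open Real

/-- If `x' = f · x` with `f` continuous, then `x t = x 0 · exp(∫₀ᵗ f)`. -/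
lemma ode_exp_sol (f x : ℝ → ℝ) (hf : Continuous f)
    (hx : ∀ t, HasDerivAt x (f t * x t) t) :
    ∀ t, x t = x 0 * Real.exp (∫ s in (0:ℝ)..t, f s) := by
  set G : ℝ → ℝ := fun t => ∫ s in (0:ℝ)..t, f s with hG
  have hGd : ∀ t, HasDerivAt G (f t) t := fun t =>
    (hf.integral_hasStrictDerivAt 0 t).hasDerivAt
  set h : ℝ → ℝ := fun t => x t * Real.exp (-G t) with hh
  have hhd : ∀ t, HasDerivAt h 0 t := by
    intro t
    have := (hx t).mul ((hGd t).neg.exp)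
    refine this.congr_deriv ?_
    ring
  have hconst : ∀ t, h t = h 0 :=
    fun t => is_const_of_deriv_eq_zero (fun s => (hhd s).differentiableAt)
      (fun s => (hhd s).deriv) t 0
  intro t
  have h0 : G 0 = 0 := intervalIntegral.integral_same
  have := hconst t
  simp only [hh, h0, neg_zero, Real.exp_zero, mul_one] at this
  have : x t * Real.exp (-G t) * Real.exp (G t) = x 0 * Real.exp (G t) := by
    rw [this]
  rwa [mul_assoc, ← Real.exp_add, neg_add_cancel, Real.exp_zero, mul_one] at this

/-- Conservation relation for the deterministic SIS logistic competition system: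
`x₁(t)^{λ₂} / x₂(t)^{λ₁} = (x₁(0)^{λ₂} / x₂(0)^{λ₁}) · exp((μ₂λ₁ - μ₁λ₂) t)` for `t ≥ 0`,
provided the initial data are strictly positive. -/
theorem sis_competition_conservation
    (lam1 lam2 mu1 mu2 : ℝ) (hlam1 : 0 < lam1) (hlam2 : 0 < lam2)
    (hmu1 : 0 < mu1) (hmu2 : 0 < mu2)
    (x1 x2 : ℝ → ℝ)
    (hx1 : ∀ t : ℝ, HasDerivAt x1 (lam1 * x1 t * (1 - x1 t - x2 t) - mu1 * x1 t) t)
    (hx2 : ∀ t : ℝ, HasDerivAt x2 (lam2 * x2 t * (1 - x1 t - x2 t) - mu2 * x2 t) t)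
    (h10 : 0 < x1 0) (h20 : 0 < x2 0) :
    ∀ t : ℝ, 0 ≤ t →
      x1 t ^ lam2 / x2 t ^ lam1
        = (x1 0 ^ lam2 / x2 0 ^ lam1) * Real.exp ((mu2 * lam1 - mu1 * lam2) * t) := by
  have hc1 : Continuous x1 := continuous_iff_continuousAt.mpr fun t => (hx1 t).differentiableAt.continuousAt
  have hc2 : Continuous x2 := continuous_iff_continuousAt.mpr fun t => (hx2 t).differentiableAt.continuousAt
  set f1 : ℝ → ℝ := fun t => lam1 * (1 - x1 t - x2 t) - mu1 with hf1def
  set f2 : ℝ → ℝ := fun t => lam2 * (1 - x1 t - x2 t) - mu2 with hf2def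
  have hf1 : Continuous f1 :=
    (continuous_const.mul ((continuous_const.sub hc1).sub hc2)).sub continuous_const
  have hf2 : Continuous f2 :=
    (continuous_const.mul ((continuous_const.sub hc1).sub hc2)).sub continuous_const
  have hx1' : ∀ t, HasDerivAt x1 (f1 t * x1 t) t := by
    intro t; have := hx1 t; convert this using 1; simp only [hf1def]; ring
  have hx2' : ∀ t, HasDerivAt x2 (f2 t * x2 t) t := by
    intro t; have := hx2 t; convert this using 1; simp only [hf2def]; ring
  set G1 : ℝ → ℝ := fun t => ∫ s in (0:ℝ)..t, f1 s with hG1def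
  set G2 : ℝ → ℝ := fun t => ∫ s in (0:ℝ)..t, f2 s with hG2def
  have hsol1 : ∀ t, x1 t = x1 0 * Real.exp (G1 t) := ode_exp_sol f1 x1 hf1 hx1'
  have hsol2 : ∀ t, x2 t = x2 0 * Real.exp (G2 t) := ode_exp_sol f2 x2 hf2 hx2'
  have hG1d : ∀ t, HasDerivAt G1 (f1 t) t := fun t =>
    (hf1.integral_hasStrictDerivAt 0 t).hasDerivAt
  have hG2d : ∀ t, HasDerivAt G2 (f2 t) t := fun t =>
    (hf2.integral_hasStrictDerivAt 0 t).hasDerivAt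
  set c : ℝ := mu2 * lam1 - mu1 * lam2 with hcdef
  set k : ℝ → ℝ := fun t => lam2 * G1 t - lam1 * G2 t - c * t with hkdef
  have hkd : ∀ t, HasDerivAt k 0 t := by
    intro t
    have := (((hG1d t).const_mul lam2).sub ((hG2d t).const_mul lam1)).sub
      ((hasDerivAt_id t).const_mul c)
    refine this.congr_deriv ?_
    simp only [hf1def, hf2def, hcdef]
    ring
  have hkconst : ∀ t, k t = k 0 :=
    fun t => is_const_of_deriv_eq_zero (fun s => (hkd s).differentiableAt)
      (fun s => (hkd s).deriv) t 0
  have hk0 : k 0 = 0 := by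
    simp [hkdef, hG1def, hG2def, intervalIntegral.integral_same]
  intro t _
  have hkt : lam2 * G1 t - lam1 * G2 t = c * t := by
    have := hkconst t; rw [hk0] at this
    simp only [hkdef] at this; linarith
  rw [hsol1 t, hsol2 t,
    Real.mul_rpow h10.le (Real.exp_pos _).le,
    Real.mul_rpow h20.le (Real.exp_pos _).le,
    ← Real.exp_mul, ← Real.exp_mul,
    mul_div_mul_comm, ← Real.exp_sub,
    show G1 t * lam2 - G2 t * lam1 = c * t by linarith]
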